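/- arXiv:1708.05022 — 2 statements merged into one kernel-verified Lean document; each statement's English description precedes it below -/
import Mathlib

section
/- Let $0<\alpha<1$ and let $X_n$ be independent $\{0,1\}$-valued random variables with $\mathbb{E}[X_n]=n^{-\alpha}$. Define the counting function $a_n(\omega)$ as the smallest integer $m$ with $X_1(\omega)+\cdots+X_m(\omega)=n$. Then almost surely there exists a constant $C_\omega>0$ such that for all sufficiently large $n$, $C_\omega^{-1} n^{1/(1-\alpha)} \le a_n(\omega) \le C_\omega n^{1/(1-\alpha)}$. -/
open MeasureTheory ProbabilityTheory Filter Finset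

-- lower bound
theorem em_lower (α : ℝ) (hα0 : 0 < α) (hα1 : α < 1) (m : ℕ) :
    (m : ℝ) ^ (1 - α) ≤ ∑ k ∈ Icc 1 m, (k : ℝ) ^ (-α) := by
  rcases Nat.eq_zero_or_pos m with h | h
  · subst h; simp [Real.zero_rpow (by linarith : (1:ℝ) - α ≠ 0)]
  have key : ∀ k ∈ Icc 1 m, (m : ℝ) ^ (-α) ≤ (k : ℝ) ^ (-α) := by
    intro k hk
    simp only [mem_Icc] at hk
    exact Real.rpow_le_rpow_of_nonpos (by exact_mod_cast hk.1) (by exact_mod_cast hk.2)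
      (by linarith)
  calc (m : ℝ) ^ (1 - α) = (m : ℝ) * (m : ℝ) ^ (-α) := by
        rw [← Real.rpow_one_add' (by positivity) (by linarith : (1:ℝ) + -α ≠ 0)]
        ring_nf
      _ = ∑ _k ∈ Icc 1 m, (m : ℝ) ^ (-α) := by
        rw [Finset.sum_const, Nat.card_Icc]; simp [nsmul_eq_mul]
      _ ≤ _ := Finset.sum_le_sum key

theorem em_upper (α : ℝ) (hα0 : 0 < α) (hα1 : α < 1) (m : ℕ) :
    ∑ k ∈ Icc 1 m, (k : ℝ) ^ (-α) ≤ (m : ℝ) ^ (1 - α) / (1 - α) := by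
  have hp0 : (0:ℝ) < 1 - α := by linarith
  induction m with
  | zero => simp [Real.zero_rpow (by linarith : (1:ℝ) - α ≠ 0)]
  | succ m ih =>
    rw [← Finset.insert_Icc_right_eq_Icc_add_one (by omega : 1 ≤ m + 1), Finset.sum_insert (by simp)]
    have hk1 : (1:ℝ) ≤ (m + 1 : ℕ) := by exact_mod_cast Nat.one_le_iff_ne_zero.2 (by omega)
    set k : ℝ := ((m + 1 : ℕ) : ℝ) with hkdef
    have hk0 : (0:ℝ) < k := by linarith
    -- (k-1)^(1-α) ≤ k^(1-α) - (1-α) * k^(-α)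
    have bern : (1 + (-1/k)) ^ (1 - α) ≤ 1 + (1 - α) * (-1/k) := by
      apply rpow_one_add_le_one_add_mul_self _ hp0.le (by linarith)
      rw [neg_div, neg_le, neg_neg]
      exact div_le_one_of_le₀ hk1 hk0.le
    have key : ((m : ℕ) : ℝ) ^ (1 - α) ≤ k ^ (1 - α) - (1 - α) * k ^ (-α) := by
      have hm : ((m : ℕ) : ℝ) = k * (1 + (-1/k)) := by
        have : k = (m:ℝ) + 1 := by rw [hkdef]; push_cast; ring
        field_simp [this]; linarith
      have h1 : (0:ℝ) ≤ 1 + (-1/k) := by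
        rw [neg_div, ← sub_eq_add_neg, sub_nonneg]
        exact div_le_one_of_le₀ hk1 hk0.le
      calc ((m : ℕ) : ℝ) ^ (1 - α) = k ^ (1 - α) * (1 + (-1/k)) ^ (1 - α) := by
            rw [hm, Real.mul_rpow hk0.le h1]
        _ ≤ k ^ (1 - α) * (1 + (1 - α) * (-1/k)) := by
            apply mul_le_mul_of_nonneg_left bern (Real.rpow_nonneg hk0.le _)
        _ = k ^ (1 - α) - (1 - α) * (k ^ (1 - α) / k) := by ring
        _ = k ^ (1 - α) - (1 - α) * k ^ (-α) := by
            rw [← Real.rpow_sub_one hk0.ne']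
            ring_nf
    have : k ^ (-α) + ((m:ℕ) : ℝ) ^ (1 - α) / (1 - α) ≤ k ^ (1 - α) / (1 - α) := by
      rw [← sub_nonneg] at key ⊢
      have : k ^ (1 - α) / (1 - α) - (k ^ (-α) + ((m:ℕ) : ℝ) ^ (1 - α) / (1 - α))
          = (k ^ (1 - α) - (1 - α) * k ^ (-α) - ((m:ℕ):ℝ) ^ (1 - α)) / (1 - α) := by
        field_simp; ring
      rw [this]
      exact div_nonneg key hp0.le
    calc k ^ (-α) + ∑ x ∈ Icc 1 m, ((x:ℕ) : ℝ) ^ (-α)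
        ≤ k ^ (-α) + ((m:ℕ):ℝ) ^ (1 - α) / (1 - α) := by linarith [ih]
      _ ≤ _ := this



theorem stmt0
    {Ω : Type*} [MeasureSpace Ω] [IsProbabilityMeasure (ℙ : Measure Ω)]
    (α : ℝ) (hα0 : 0 < α) (hα1 : α < 1)
    (X : ℕ → Ω → ℝ)
    (hmeas : ∀ n, Measurable (X n))
    (hval : ∀ n ω, X n ω = 0 ∨ X n ω = 1)
    (hindep : iIndepFun X ℙ)
    (hexp : ∀ n, 1 ≤ n → ∫ ω, X n ω ∂ℙ = (n : ℝ) ^ (-α))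
    (a : ℕ → Ω → ℕ)
    (ha : ∀ n ω, a n ω = sInf {m : ℕ | ∑ k ∈ Icc 1 m, X k ω = n}) :
    ∀ᵐ ω ∂ℙ, ∃ C > (0 : ℝ), ∀ᶠ n : ℕ in atTop,
      C⁻¹ * (n : ℝ) ^ ((1 : ℝ) / (1 - α)) ≤ (a n ω : ℝ) ∧
      (a n ω : ℝ) ≤ C * (n : ℝ) ^ ((1 : ℝ) / (1 - α)) := by
  classical
  set S : ℕ → Ω → ℝ := fun m ω => ∑ k ∈ Icc 1 m, X k ω with hS
  set Em : ℕ → ℝ := fun m => ∑ k ∈ Icc 1 m, (k : ℝ) ^ (-α) with hEm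
  have hbd : ∀ k ω, |X k ω| ≤ 1 := by
    intro k ω; rcases hval k ω with h | h <;> rw [h] <;> norm_num
  have hmem2 : ∀ k, MemLp (X k) 2 ℙ := by
    intro k
    exact (memLp_top_of_bound (hmeas k).aestronglyMeasurable 1
      (ae_of_all _ (hbd k))).mono_exponent le_top
  have hint : ∀ k, Integrable (X k) ℙ := fun k => (hmem2 k).integrable one_le_two
  have hSsum : ∀ m, S m = ∑ k ∈ Icc 1 m, X k := by
    intro m; ext ω; rw [hS]; simp
  have hSmem2 : ∀ m, MemLp (S m) 2 ℙ := by
    intro m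
    rw [hSsum]
    exact memLp_finsetSum' _ (fun k _ => hmem2 k)
  have hSexp : ∀ m, ∫ ω, S m ω ∂ℙ = Em m := by
    intro m
    rw [hS]
    simp only []
    rw [integral_finset_sum _ (fun k _ => hint k)]
    exact Finset.sum_congr rfl fun k hk => hexp k (mem_Icc.1 hk).1
  have hvarX : ∀ k, 1 ≤ k → variance (X k) ℙ ≤ (k : ℝ) ^ (-α) := by
    intro k hk
    have h2 : ∫ ω, (X k ω) ^ 2 ∂ℙ = (k:ℝ) ^ (-α) := by
      rw [← hexp k hk]
      apply integral_congr_ae (ae_of_all _ fun ω => ?_)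
      rcases hval k ω with h | h <;> rw [h] <;> norm_num
    calc variance (X k) ℙ ≤ ∫ ω, (X k ^ 2) ω ∂ℙ :=
          variance_le_expectation_sq (hmeas k).aestronglyMeasurable
      _ = (k:ℝ) ^ (-α) := h2
  have hvarS : ∀ m, variance (S m) ℙ ≤ Em m := by
    intro m
    rw [hSsum]
    rw [IndepFun.variance_sum (fun k _ => hmem2 k)
      (fun i _ j _ hij => hindep.indepFun hij)]
    exact Finset.sum_le_sum fun k hk => hvarX k (mem_Icc.1 hk).1
  -- Chebyshev + Borel-Cantelli
  have hEmpos : ∀ m : ℕ, 1 ≤ m → 0 < Em m := by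
    intro m hm
    have := em_lower α hα0 hα1 m
    have h0 : (0:ℝ) < (m:ℝ) ^ (1 - α) :=
      Real.rpow_pos_of_pos (by exact_mod_cast hm) _
    rw [hEm]; simp only []; linarith
  set r : ℝ := (2:ℝ) ^ (-(1-α)) with hrdef
  have hr0 : 0 < r := Real.rpow_pos_of_pos two_pos _
  have hr1 : r < 1 := Real.rpow_lt_one_of_one_lt_of_neg (by norm_num) (by linarith)
  have hrj : ∀ j : ℕ, ((2^j : ℕ) : ℝ) ^ (-(1-α)) = r ^ j := by
    intro j
    rw [Nat.cast_pow, Nat.cast_ofNat, ← Real.rpow_natCast (2:ℝ) j,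
      ← Real.rpow_mul (by norm_num), hrdef, ← Real.rpow_natCast ((2:ℝ) ^ (-(1-α))) j,
      ← Real.rpow_mul (by norm_num), mul_comm]
  set bad : ℕ → Set Ω := fun j => {ω | Em (2^j) / 2 ≤ |S (2^j) ω - Em (2^j)|} with hbad
  have hbadle : ∀ j, ℙ (bad j) ≤ ENNReal.ofReal (4 * r ^ j) := by
    intro j
    have h1 : (1:ℕ) ≤ 2^j := Nat.one_le_two_pow
    have hpos := hEmpos _ h1
    have cheb := meas_ge_le_variance_div_sq (μ := ℙ) (hSmem2 (2^j)) (half_pos hpos)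
    rw [hSexp] at cheb
    refine le_trans cheb (ENNReal.ofReal_le_ofReal ?_)
    have e1 : variance (S (2^j)) ℙ / (Em (2^j) / 2) ^ 2 ≤ Em (2^j) / (Em (2^j) / 2) ^ 2 := by
      apply div_le_div_of_nonneg_right (hvarS _) (by positivity)
    have e2 : Em (2^j) / (Em (2^j) / 2) ^ 2 = 4 / Em (2^j) := by
      field_simp; ring
    have e3 : 4 / Em (2^j) ≤ 4 * r ^ j := by
      rw [← hrj j]
      have hl := em_lower α hα0 hα1 (2^j)
      have h0 : (0:ℝ) < ((2^j:ℕ):ℝ) ^ (1 - α) :=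
        Real.rpow_pos_of_pos (by positivity) _
      have : 4 / Em (2^j) ≤ 4 / ((2^j:ℕ):ℝ) ^ (1 - α) := by
        apply div_le_div_of_nonneg_left (by norm_num) h0
        exact hl
      refine le_trans this ?_
      rw [Real.rpow_neg (by positivity), div_eq_mul_inv]
    linarith [e1]
  have hsum : (∑' j, ℙ (bad j)) ≠ ⊤ := by
    apply ne_top_of_le_ne_top _ (ENNReal.tsum_le_tsum hbadle)
    have : (∑' j : ℕ, ENNReal.ofReal (4 * r ^ j))
        = ENNReal.ofReal 4 * ∑' j : ℕ, (ENNReal.ofReal r) ^ j := by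
      rw [← ENNReal.tsum_mul_left]
      congr 1; ext j
      rw [← ENNReal.ofReal_pow hr0.le, ← ENNReal.ofReal_mul (by norm_num)]
    rw [this, ENNReal.tsum_geometric]
    apply ENNReal.mul_ne_top ENNReal.ofReal_ne_top
    rw [Ne, ENNReal.inv_eq_top, tsub_eq_zero_iff_le]
    exact not_le.2 (ENNReal.ofReal_lt_one.2 hr1)
  have hae : ∀ᵐ ω ∂ℙ, ∀ᶠ j in atTop, ω ∉ bad j := ae_eventually_notMem hsum
  set p : ℝ := 1 - α with hpdef
  have hp0 : 0 < p := by rw [hpdef]; linarith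
  have hp1 : p ≤ 1 := by rw [hpdef]; linarith
  -- monotonicity of S in m
  have hSmono : ∀ ω, Monotone (fun m => S m ω) := by
    intro ω m m' hmm'
    apply Finset.sum_le_sum_of_subset_of_nonneg (Icc_subset_Icc_right hmm')
    intro k _ _
    rcases hval k ω with h | h <;> rw [h] <;> norm_num
  filter_upwards [hae] with ω hω
  obtain ⟨J, hJ⟩ := eventually_atTop.1 hω
  -- two-sided bound on S m ω for m ≥ 2^J
  have hf : ∀ m : ℕ, 2^J ≤ m →
      (1/4) * (m:ℝ)^p ≤ S m ω ∧ S m ω ≤ (3/p) * (m:ℝ)^p := by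
    intro m hm
    have hm1 : 1 ≤ m := le_trans Nat.one_le_two_pow hm
    set j := Nat.log 2 m with hjdef
    have hj1 : 2^j ≤ m := Nat.pow_log_le_self 2 (by omega)
    have hj2 : m < 2^(j+1) := Nat.lt_pow_succ_log_self (by norm_num) m
    have hjJ : J ≤ j := (Nat.le_log_iff_pow_le (by norm_num) (by omega)).2 hm
    have g1 : |S (2^j) ω - Em (2^j)| < Em (2^j)/2 := not_le.1 (hJ j hjJ)
    have g2 : |S (2^(j+1)) ω - Em (2^(j+1))| < Em (2^(j+1))/2 :=
      not_le.1 (hJ (j+1) (by omega))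
    have l2 : ((2^j:ℕ):ℝ)^p ≤ Em (2^j) := em_lower α hα0 hα1 (2^j)
    have u2 : Em (2^(j+1)) ≤ ((2^(j+1):ℕ):ℝ)^p / p := em_upper α hα0 hα1 (2^(j+1))
    have hA : (m:ℝ)/2 ≤ ((2^j:ℕ):ℝ) := by
      have : (m:ℝ) < ((2^(j+1):ℕ):ℝ) := by exact_mod_cast hj2
      push_cast at this ⊢
      rw [pow_succ] at this
      linarith
    have hB : ((2^(j+1):ℕ):ℝ) ≤ 2 * (m:ℝ) := by
      have : ((2^j:ℕ):ℝ) ≤ (m:ℝ) := by exact_mod_cast hj1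
      push_cast at this ⊢
      rw [pow_succ]
      linarith
    have h2p : (2:ℝ)^p ≤ 2 := by
      calc (2:ℝ)^p ≤ (2:ℝ)^(1:ℝ) :=
            Real.rpow_le_rpow_of_exponent_le one_le_two hp1
        _ = 2 := Real.rpow_one 2
    have h2p0 : (0:ℝ) < (2:ℝ)^p := Real.rpow_pos_of_pos two_pos _
    constructor
    · -- lower bound
      have s1 : Em (2^j)/2 ≤ S (2^j) ω := by
        have := (abs_lt.1 g1).1; linarith
      have s2 : S (2^j) ω ≤ S m ω := hSmono ω hj1
      have s3 : ((m:ℝ)/2)^p ≤ ((2^j:ℕ):ℝ)^p :=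
        Real.rpow_le_rpow (by positivity) hA hp0.le
      have s4 : (m:ℝ)^p / 2 ≤ ((m:ℝ)/2)^p := by
        rw [Real.div_rpow (by positivity) (by norm_num)]
        gcongr
      linarith
    · -- upper bound
      have s1 : S (2^(j+1)) ω ≤ (3/2) * Em (2^(j+1)) := by
        have := (abs_lt.1 g2).2; linarith
      have s2 : S m ω ≤ S (2^(j+1)) ω := hSmono ω hj2.le
      have s3 : ((2^(j+1):ℕ):ℝ)^p ≤ (2*(m:ℝ))^p :=
        Real.rpow_le_rpow (by positivity) hB hp0.le
      have s4 : (2*(m:ℝ))^p ≤ 2 * (m:ℝ)^p := by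
        rw [Real.mul_rpow (by norm_num) (by positivity)]
        gcongr
      have s5 : Em (2^(j+1)) ≤ 2 * (m:ℝ)^p / p := by
        refine le_trans u2 ?_
        gcongr
        linarith
      have h6 : 3 * (2*(m:ℝ)^p/p) / 2 = 3/p * (m:ℝ)^p := by
        field_simp
      have h7 : 3 * Em (2^(j+1)) / 2 ≤ 3 * (2*(m:ℝ)^p/p) / 2 := by linarith
      rw [h6] at h7
      linarith
  -- S is natural-valued via the counting function T
  set T : ℕ → ℕ := fun m => ((Icc 1 m).filter (fun k => X k ω = 1)).card with hT
  have hST : ∀ m, S m ω = (T m : ℝ) := by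
    intro m
    rw [hS, hT]
    simp only []
    have hcong : ∀ k ∈ Icc 1 m, X k ω = if X k ω = 1 then (1:ℝ) else 0 := by
      intro k _
      rcases hval k ω with h | h
      · simp [h]
      · simp [h]
    rw [Finset.sum_congr rfl hcong, Finset.sum_boole]
  have hTstep : ∀ m, T (m+1) ≤ T m + 1 := by
    intro m
    rw [hT]
    simp only []
    rw [← Finset.insert_Icc_right_eq_Icc_add_one (by omega : 1 ≤ m + 1), Finset.filter_insert]
    split
    · rw [Finset.card_insert_of_notMem (by simp)]
    · omega
  have hTle : ∀ m, T m ≤ m := by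
    intro m
    calc T m ≤ (Icc 1 m).card := Finset.card_filter_le _ _
      _ = m := by rw [Nat.card_Icc]; omega
  -- T is unbounded
  have hTunbdd : ∀ n : ℕ, ∃ m, n ≤ T m := by
    intro n
    have htend : Tendsto (fun m : ℕ => (1/4) * (m:ℝ)^p) atTop atTop :=
      Tendsto.const_mul_atTop (by norm_num)
        ((tendsto_rpow_atTop hp0).comp tendsto_natCast_atTop_atTop)
    obtain ⟨m, hm1, hm2⟩ :=
      ((htend.eventually_ge_atTop (n:ℝ)).and (eventually_ge_atTop (2^J))).exists
    refine ⟨m, ?_⟩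
    have := (hf m hm2).1
    rw [hST m] at this
    exact_mod_cast le_trans hm1 this
  -- T hits every value
  have hThit : ∀ n : ℕ, ∃ m, T m = n := by
    intro n
    rcases Nat.eq_zero_or_pos n with h | h
    · refine ⟨0, ?_⟩
      rw [hT]; simp [h]
    · obtain ⟨m₀, hm₀⟩ := hTunbdd n
      have H : ∃ m, n ≤ T m := ⟨m₀, hm₀⟩
      refine ⟨Nat.find H, ?_⟩
      have hfind := Nat.find_spec H
      have hmpos : 0 < Nat.find H := by
        rcases Nat.eq_zero_or_pos (Nat.find H) with h0 | h0
        · exfalso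
          have hT0 : T 0 = 0 := by rw [hT]; simp
          rw [h0] at hfind
          omega
        · exact h0
      have hlt : ¬ n ≤ T (Nat.find H - 1) := Nat.find_min H (Nat.sub_lt hmpos one_pos)
      have hstep := hTstep (Nat.find H - 1)
      have heq : Nat.find H - 1 + 1 = Nat.find H := by omega
      rw [heq] at hstep
      omega
  -- a n ω satisfies S (a n ω) ω = n
  have haS : ∀ n : ℕ, T (a n ω) = n := by
    intro n
    obtain ⟨m, hm⟩ := hThit n
    have hne : {m : ℕ | ∑ k ∈ Icc 1 m, X k ω = (n:ℝ)}.Nonempty := by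
      refine ⟨m, ?_⟩
      show S m ω = (n:ℝ)
      rw [hST m, hm]
    have := Nat.sInf_mem hne
    rw [← ha n ω] at this
    have h2 : S (a n ω) ω = (n:ℝ) := this
    rw [hST] at h2
    exact_mod_cast h2
  have hage : ∀ n : ℕ, n ≤ a n ω := by
    intro n
    calc n = T (a n ω) := (haS n).symm
      _ ≤ a n ω := hTle _
  -- final constant
  set C : ℝ := max ((3/p) ^ p⁻¹) ((4:ℝ) ^ p⁻¹) with hC
  have hC0 : 0 < C := lt_of_lt_of_le (Real.rpow_pos_of_pos (by positivity) _) (le_max_right _ _)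
  refine ⟨C, hC0, ?_⟩
  rw [eventually_atTop]
  refine ⟨2^J, fun n hn => ?_⟩
  set m := a n ω with hm
  have hm2J : 2^J ≤ m := le_trans hn (hage n)
  have hm1 : 1 ≤ m := le_trans Nat.one_le_two_pow hm2J
  obtain ⟨hlow, hup⟩ := hf m hm2J
  rw [hST m, haS n] at hlow hup
  have hmp0 : (0:ℝ) ≤ (m:ℝ) := by positivity
  have hone : (1:ℝ)/(1-α) = p⁻¹ := by rw [hpdef, one_div]
  rw [hone]
  constructor
  · -- C⁻¹ * n^(1/p) ≤ m
    have h1 : (n:ℝ) ≤ (3/p) * (m:ℝ)^p := hup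
    have h2 : (n:ℝ)^p⁻¹ ≤ ((3/p) * (m:ℝ)^p)^p⁻¹ :=
      Real.rpow_le_rpow (by positivity) h1 (by positivity)
    have h3 : ((3/p) * (m:ℝ)^p)^p⁻¹ = (3/p)^p⁻¹ * (m:ℝ) := by
      rw [Real.mul_rpow (by positivity) (Real.rpow_nonneg hmp0 _),
        Real.rpow_rpow_inv hmp0 hp0.ne']
    rw [h3] at h2
    have h4 : (3/p)^p⁻¹ ≤ C := le_max_left _ _
    have h5 : (0:ℝ) < (3/p)^p⁻¹ := Real.rpow_pos_of_pos (by positivity) _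
    rw [inv_mul_le_iff₀ hC0]
    calc (n:ℝ)^p⁻¹ ≤ (3/p)^p⁻¹ * (m:ℝ) := h2
      _ ≤ C * (m:ℝ) := mul_le_mul_of_nonneg_right h4 hmp0
  · -- m ≤ C * n^(1/p)
    have h1 : (m:ℝ)^p ≤ 4 * (n:ℝ) := by linarith
    have h2 : ((m:ℝ)^p)^p⁻¹ ≤ (4 * (n:ℝ))^p⁻¹ :=
      Real.rpow_le_rpow (Real.rpow_nonneg hmp0 _) h1 (by positivity)
    rw [Real.rpow_rpow_inv hmp0 hp0.ne',
      Real.mul_rpow (by norm_num) (by positivity)] at h2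
    calc (m:ℝ) ≤ (4:ℝ)^p⁻¹ * (n:ℝ)^p⁻¹ := h2
      _ ≤ C * (n:ℝ)^p⁻¹ := mul_le_mul_of_nonneg_right (le_max_right _ _)
          (Real.rpow_nonneg (Nat.cast_nonneg n) _)
end

section
/- Let $Z_1,\dots,Z_n$ be a martingale difference sequence of real random variables with $|Z_i|\le 1$ almost surely, i.e. $\mathbb{E}(Z_i \mid Z_1,\dots,Z_{i-1})=0$ a.s. Let $V_i = \mathrm{Var}(Z_i\mid Z_1,\dots,Z_{i-1})$ and $T_n = \sum_{i=1}^n V_i$. Then for any $a,b>0$: $\mathbb{P}\big( |\sum_{i=1}^n Z_i| \ge a \text{ and } T_n \le b \big) \le 2 e^{-a^2/(2(a+b))}$. -/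
open MeasureTheory ProbabilityTheory Finset

/-- Pointwise exponential inequality. -/
lemma freedman_exp_pointwise {l z : ℝ} (hl0 : 0 < l) (hl1 : l < 1) (hz : |z| ≤ 1) :
    Real.exp (l * z) ≤ 1 + l * z + l ^ 2 / (2 * (1 - l)) * z ^ 2 := by
  have hx : |l * z| ≤ 1 := by
    rw [abs_mul, abs_of_pos hl0]
    nlinarith [abs_nonneg z]
  have h := Real.exp_bound hx (n := 3) (by norm_num)
  have hsum : ∑ m ∈ range 3, (l * z) ^ m / (m.factorial : ℝ) = 1 + l * z + (l * z) ^ 2 / 2 := by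
    norm_num [Finset.sum_range_succ]
  rw [hsum] at h
  norm_num [Nat.factorial] at h
  have h1 : Real.exp (l * z) ≤ 1 + l * z + (l * z) ^ 2 / 2 + |l * z| ^ 3 * (2 / 9) := by
    have := (abs_sub_le_iff.1 h).1
    rw [abs_mul]
    linarith
  have habs : |l * z| ^ 3 ≤ l ^ 3 * z ^ 2 := by
    rw [abs_mul, abs_of_pos hl0, mul_pow]
    have hz0 : 0 ≤ |z| := abs_nonneg z
    have h3 : |z| ^ 3 ≤ |z| ^ 2 := by nlinarith
    have := mul_le_mul_of_nonneg_left h3 (by positivity : (0:ℝ) ≤ l ^ 3)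
    rwa [sq_abs] at this
  have hcoef : l ^ 2 / 2 + l ^ 3 * (2 / 9) ≤ l ^ 2 / (2 * (1 - l)) := by
    rw [le_div_iff₀ (by linarith : (0:ℝ) < 2 * (1 - l))]
    nlinarith
  have hz2 : (0:ℝ) ≤ z ^ 2 := sq_nonneg z
  calc Real.exp (l * z) ≤ 1 + l * z + (l * z) ^ 2 / 2 + |l * z| ^ 3 * (2 / 9) := h1
    _ ≤ 1 + l * z + l ^ 2 * z ^ 2 / 2 + l ^ 3 * z ^ 2 * (2 / 9) := by nlinarith [mul_pow l z 2]
    _ = 1 + l * z + (l ^ 2 / 2 + l ^ 3 * (2 / 9)) * z ^ 2 := by ring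
    _ ≤ 1 + l * z + l ^ 2 / (2 * (1 - l)) * z ^ 2 := by nlinarith

lemma integrable_of_ae_bound {Ω : Type*} [MeasureSpace Ω] [IsFiniteMeasure (ℙ : Measure Ω)]
    {f : Ω → ℝ} (hf : AEStronglyMeasurable f ℙ) {C : ℝ} (h : ∀ᵐ ω ∂ℙ, |f ω| ≤ C) :
    Integrable f ℙ :=
  (integrable_const C).mono' hf (by simpa [Real.norm_eq_abs] using h)

lemma freedman_calc {a b : ℝ} (ha : 0 < a) (hb : 0 < b) :
    -(a / (a + b) * a - (a / (a + b)) ^ 2 / (2 * (1 - a / (a + b))) * b) =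
      -a ^ 2 / (2 * (a + b)) := by
  have hab : (0:ℝ) < a + b := by linarith
  have h1 : 1 - a / (a + b) = b / (a + b) := by field_simp; ring
  rw [h1]
  field_simp
  ring

set_option maxHeartbeats 1000000 in
lemma freedman_onesided {Ω : Type*} [MeasureSpace Ω] [IsProbabilityMeasure (ℙ : Measure Ω)]
    (n : ℕ) (Z : ℕ → Ω → ℝ) (G : ℕ → MeasurableSpace Ω)
    (hGle : ∀ i, G i ≤ (inferInstance : MeasurableSpace Ω))
    (hmeas : ∀ i, Measurable (Z i))
    (hadapt : ∀ i k : ℕ, i ∈ Icc 1 (k - 1) → Measurable[G k] (Z i))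
    (hbdd : ∀ i ∈ Icc 1 n, ∀ᵐ ω ∂ℙ, |Z i ω| ≤ 1)
    (hmart : ∀ i ∈ Icc 1 n, (ℙ[Z i | G i]) =ᵐ[ℙ] 0)
    (V : ℕ → Ω → ℝ)
    (hVeq : ∀ i, V i = ℙ[fun ω => (Z i ω) ^ 2 | G i])
    (hGmono : Monotone G)
    (a b : ℝ) (ha : 0 < a) (hb : 0 < b) :
    ℙ {ω | a ≤ ∑ i ∈ Icc 1 n, Z i ω ∧ ∑ i ∈ Icc 1 n, V i ω ≤ b} ≤
      ENNReal.ofReal (Real.exp (-a ^ 2 / (2 * (a + b)))) := by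
  have hab : (0:ℝ) < a + b := by linarith
  set l : ℝ := a / (a + b) with hl
  have hl0 : 0 < l := div_pos ha hab
  have hl1 : l < 1 := (div_lt_one hab).2 (by linarith)
  have h1l : 0 < 1 - l := by linarith
  set c : ℝ := l ^ 2 / (2 * (1 - l)) with hc
  have hc0 : 0 < c := by positivity
  -- basic facts about V
  have hVsm : ∀ i, StronglyMeasurable[G i] (V i) := fun i => (hVeq i) ▸ stronglyMeasurable_condExp
  have hVmeas : ∀ i, Measurable (V i) := fun i => ((hVsm i).mono (hGle i)).measurable
  have hZsq_int : ∀ i ∈ Icc 1 n, Integrable (fun ω => (Z i ω) ^ 2) ℙ := by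
    intro i hi
    refine integrable_of_ae_bound ((hmeas i).pow_const 2).aestronglyMeasurable
      (C := 1) ?_
    filter_upwards [hbdd i hi] with ω hω
    obtain ⟨h1, h2⟩ := abs_le.mp hω
    rw [abs_of_nonneg (sq_nonneg _)]
    nlinarith
  have hV01 : ∀ i ∈ Icc 1 n, ∀ᵐ ω ∂ℙ, 0 ≤ V i ω ∧ V i ω ≤ 1 := by
    intro i hi
    have h0 : 0 ≤ᵐ[ℙ] ℙ[fun ω => (Z i ω) ^ 2 | G i] :=
      condExp_nonneg (ae_of_all _ fun ω => sq_nonneg _)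
    have h1 : ℙ[fun ω => (Z i ω) ^ 2 | G i] ≤ᵐ[ℙ] ℙ[(fun _ => (1:ℝ)) | G i] := by
      refine condExp_mono (hZsq_int i hi) (integrable_const 1) ?_
      filter_upwards [hbdd i hi] with ω hω
      obtain ⟨ha1, ha2⟩ := abs_le.mp hω
      nlinarith
    rw [condExp_const (hGle i)] at h1
    rw [hVeq i]
    filter_upwards [h0, h1] with ω hω0 hω1
    exact ⟨hω0, hω1⟩
  -- measurability of the exponential process
  have hSmeas : ∀ k : ℕ, Measurable fun ω => ∑ i ∈ Icc 1 k, Z i ω :=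
    fun k => Finset.measurable_sum _ fun i _ => hmeas i
  have hTmeas : ∀ k : ℕ, Measurable fun ω => ∑ i ∈ Icc 1 k, V i ω :=
    fun k => Finset.measurable_sum _ fun i _ => hVmeas i
  have hFmeas : ∀ k : ℕ,
      Measurable fun ω => Real.exp (l * (∑ i ∈ Icc 1 k, Z i ω) - c * ∑ i ∈ Icc 1 k, V i ω) :=
    fun k => (((hSmeas k).const_mul l).sub ((hTmeas k).const_mul c)).exp
  -- a.e. bounds
  have hSbdd : ∀ k, k ≤ n → ∀ᵐ ω ∂ℙ, |∑ i ∈ Icc 1 k, Z i ω| ≤ (k : ℝ) := by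
    intro k hk
    have hall : ∀ᵐ ω ∂ℙ, ∀ i ∈ Icc 1 k, |Z i ω| ≤ 1 := by
      rw [Filter.eventually_all_finset]
      intro i hi
      exact hbdd i (Finset.Icc_subset_Icc_right hk hi)
    filter_upwards [hall] with ω hω
    calc |∑ i ∈ Icc 1 k, Z i ω| ≤ ∑ i ∈ Icc 1 k, |Z i ω| := Finset.abs_sum_le_sum_abs _ _
      _ ≤ ∑ _i ∈ Icc 1 k, (1:ℝ) := Finset.sum_le_sum fun i hi => hω i hi
      _ ≤ (k:ℝ) := by simp
  have hTbdd : ∀ k, k ≤ n → ∀ᵐ ω ∂ℙ, 0 ≤ (∑ i ∈ Icc 1 k, V i ω) ∧ (∑ i ∈ Icc 1 k, V i ω) ≤ (k:ℝ) := by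
    intro k hk
    have hall : ∀ᵐ ω ∂ℙ, ∀ i ∈ Icc 1 k, 0 ≤ V i ω ∧ V i ω ≤ 1 := by
      rw [Filter.eventually_all_finset]
      intro i hi
      exact hV01 i (Finset.Icc_subset_Icc_right hk hi)
    filter_upwards [hall] with ω hω
    constructor
    · exact Finset.sum_nonneg fun i hi => (hω i hi).1
    · calc (∑ i ∈ Icc 1 k, V i ω) ≤ ∑ _i ∈ Icc 1 k, (1:ℝ) :=
          Finset.sum_le_sum fun i hi => (hω i hi).2
        _ ≤ (k:ℝ) := by simp
  have hFint : ∀ k, k ≤ n →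
      Integrable (fun ω => Real.exp (l * (∑ i ∈ Icc 1 k, Z i ω) - c * ∑ i ∈ Icc 1 k, V i ω)) ℙ := by
    intro k hk
    refine integrable_of_ae_bound (hFmeas k).aestronglyMeasurable (C := Real.exp ((l + c) * k)) ?_
    filter_upwards [hSbdd k hk, hTbdd k hk] with ω h1 h2
    rw [abs_of_pos (Real.exp_pos _)]
    apply Real.exp_le_exp.2
    obtain ⟨hS1, hS2⟩ := abs_le.mp h1
    obtain ⟨hT1, hT2⟩ := h2
    nlinarith
  -- the key supermartingale estimate
  have key : ∀ k, k ≤ n →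
      (∫ ω, Real.exp (l * (∑ i ∈ Icc 1 k, Z i ω) - c * ∑ i ∈ Icc 1 k, V i ω) ∂ℙ) ≤ 1 := by
    intro k
    induction k with
    | zero =>
      intro _
      have : Icc 1 0 = (∅ : Finset ℕ) := by simp
      simp [this]
    | succ k ih =>
      intro hk1
      have hk : k ≤ n := Nat.le_of_succ_le hk1
      have hmem : k + 1 ∈ Icc 1 n := mem_Icc.2 ⟨Nat.succ_le_succ (Nat.zero_le k), hk1⟩
      have hm : G (k + 1) ≤ (inferInstance : MeasurableSpace Ω) := hGle (k + 1)
      have hsplitZ : ∀ ω, ∑ i ∈ Icc 1 (k + 1), Z i ω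
          = (∑ i ∈ Icc 1 k, Z i ω) + Z (k + 1) ω := by
        intro ω
        rw [← Finset.insert_Icc_right_eq_Icc_add_one (by omega : 1 ≤ k + 1),
          Finset.sum_insert (by simp)]
        ring
      have hsplitV : ∀ ω, ∑ i ∈ Icc 1 (k + 1), V i ω
          = (∑ i ∈ Icc 1 k, V i ω) + V (k + 1) ω := by
        intro ω
        rw [← Finset.insert_Icc_right_eq_Icc_add_one (by omega : 1 ≤ k + 1),
          Finset.sum_insert (by simp)]
        ring
      set g : Ω → ℝ :=
        fun ω => Real.exp (l * (∑ i ∈ Icc 1 k, Z i ω) - c * ∑ i ∈ Icc 1 (k + 1), V i ω) with hgdef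
      set h : Ω → ℝ := fun ω => Real.exp (l * Z (k + 1) ω) with hhdef
      have hgh : (fun ω => Real.exp
          (l * (∑ i ∈ Icc 1 (k + 1), Z i ω) - c * ∑ i ∈ Icc 1 (k + 1), V i ω)) = g * h := by
        funext ω
        rw [hgdef, hhdef]
        simp only [Pi.mul_apply]
        rw [← Real.exp_add, hsplitZ ω]
        ring_nf
      -- strong measurability of g w.r.t. G (k+1)
      have hSm : Measurable[G (k + 1)] fun ω => ∑ i ∈ Icc 1 k, Z i ω := by
        refine Finset.measurable_sum _ fun i hi => hadapt i (k + 1) ?_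
        simpa using hi
      have hTm : Measurable[G (k + 1)] fun ω => ∑ i ∈ Icc 1 (k + 1), V i ω := by
        refine Finset.measurable_sum _ fun i hi => ?_
        exact ((hVsm i).mono (hGmono (mem_Icc.1 hi).2)).measurable
      have hgsm : StronglyMeasurable[G (k + 1)] g :=
        (((hSm.const_mul l).sub (hTm.const_mul c)).exp).stronglyMeasurable
      -- integrability
      have hg_meas : Measurable g :=
        (((hSmeas k).const_mul l).sub ((hTmeas (k + 1)).const_mul c)).exp
      have hg_bdd : ∀ᵐ ω ∂ℙ, |g ω| ≤ Real.exp ((l + c) * (k + 1)) := by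
        filter_upwards [hSbdd k hk, hTbdd (k + 1) hk1] with ω h1 h2
        rw [hgdef, abs_of_pos (Real.exp_pos _)]
        apply Real.exp_le_exp.2
        obtain ⟨hS1, hS2⟩ := abs_le.mp h1
        obtain ⟨hT1, hT2⟩ := h2
        have : (k : ℝ) ≤ (k : ℝ) + 1 := by linarith
        push_cast
        nlinarith
      have hg_int : Integrable g ℙ := integrable_of_ae_bound hg_meas.aestronglyMeasurable hg_bdd
      have hh_bdd : ∀ᵐ ω ∂ℙ, |h ω| ≤ Real.exp l := by
        filter_upwards [hbdd (k + 1) hmem] with ω hω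
        rw [hhdef, abs_of_pos (Real.exp_pos _)]
        apply Real.exp_le_exp.2
        obtain ⟨h1, h2⟩ := abs_le.mp hω
        nlinarith
      have hh_meas : Measurable h := ((hmeas (k + 1)).const_mul l).exp
      have hh_int : Integrable h ℙ := integrable_of_ae_bound hh_meas.aestronglyMeasurable hh_bdd
      have hgh_int : Integrable (g * h) ℙ := by
        refine integrable_of_ae_bound (hg_meas.mul hh_meas).aestronglyMeasurable
          (C := Real.exp ((l + c) * (k + 1)) * Real.exp l) ?_
        filter_upwards [hg_bdd, hh_bdd] with ω h1 h2
        rw [Pi.mul_apply, abs_mul]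
        exact mul_le_mul h1 h2 (abs_nonneg _) (Real.exp_pos _).le
      -- pull-out property
      have pull : ℙ[g * h | G (k + 1)] =ᵐ[ℙ] g * ℙ[h | G (k + 1)] :=
        condExp_mul_of_stronglyMeasurable_left hgsm hgh_int hh_int
      -- conditional bound on h
      set poly : Ω → ℝ := fun ω => 1 + l * Z (k + 1) ω + c * (Z (k + 1) ω) ^ 2 with hpolydef
      have hpoly_int : Integrable poly ℙ := by
        refine integrable_of_ae_bound
          ((measurable_const.add ((hmeas (k + 1)).const_mul l)).add
            (((hmeas (k + 1)).pow_const 2).const_mul c)).aestronglyMeasurable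
          (C := 1 + l + c) ?_
        filter_upwards [hbdd (k + 1) hmem] with ω hω
        obtain ⟨h1, h2⟩ := abs_le.mp hω
        have hval : poly ω = 1 + l * Z (k + 1) ω + c * (Z (k + 1) ω) ^ 2 := rfl
        rw [hval, abs_le]
        have hsq : (Z (k + 1) ω) ^ 2 ≤ 1 := by nlinarith
        constructor
        · nlinarith [sq_nonneg (Z (k + 1) ω)]
        · nlinarith
      have hh_le : h ≤ᵐ[ℙ] poly := by
        filter_upwards [hbdd (k + 1) hmem] with ω hω
        have := freedman_exp_pointwise hl0 hl1 hω
        rw [hhdef, hpolydef]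
        rw [hc]
        linarith
      have hcond1 : (ℙ[h | G (k + 1)] : Ω → ℝ) ≤ᵐ[ℙ] ℙ[poly | G (k + 1)] :=
        condExp_mono hh_int hpoly_int hh_le
      -- compute ℙ[poly | G (k+1)]
      have hZc_int : Integrable (fun ω => l * Z (k + 1) ω) ℙ := by
        refine integrable_of_ae_bound ((hmeas (k + 1)).const_mul l).aestronglyMeasurable
          (C := l) ?_
        filter_upwards [hbdd (k + 1) hmem] with ω hω
        rw [abs_mul, abs_of_pos hl0]
        nlinarith [abs_nonneg (Z (k + 1) ω), abs_le.mp hω]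
      have hZsqc_int : Integrable (fun ω => c * (Z (k + 1) ω) ^ 2) ℙ :=
        (hZsq_int (k + 1) hmem).const_mul c
      have hpoly_eq : poly = (fun ω => 1 + l * Z (k + 1) ω) + fun ω => c * (Z (k + 1) ω) ^ 2 := by
        funext ω; simp [hpolydef]
      have e1 : ℙ[poly | G (k + 1)] =ᵐ[ℙ]
          ℙ[(fun ω => 1 + l * Z (k + 1) ω) | G (k + 1)]
            + ℙ[(fun ω => c * (Z (k + 1) ω) ^ 2) | G (k + 1)] := by
        rw [hpoly_eq]
        exact condExp_add ((integrable_const 1).add hZc_int) hZsqc_int (G (k + 1))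
      have e2 : ℙ[(fun ω => 1 + l * Z (k + 1) ω) | G (k + 1)] =ᵐ[ℙ] fun _ => 1 := by
        have := condExp_add (μ := ℙ) (m := G (k + 1)) (integrable_const (1:ℝ)) hZc_int
        have e2a : ℙ[(fun ω => l * Z (k + 1) ω) | G (k + 1)] =ᵐ[ℙ] 0 := by
          have hs := condExp_smul (μ := ℙ) (m := G (k + 1)) l (Z (k + 1))
          filter_upwards [hs, hmart (k + 1) hmem] with ω h1 h2
          have : ((l • Z (k + 1)) : Ω → ℝ) = fun ω => l * Z (k + 1) ω := rfl
          rw [← this, h1, Pi.smul_apply, h2]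
          simp
        filter_upwards [this, e2a] with ω h1 h2
        have : ((fun _ => (1:ℝ)) + fun ω => l * Z (k + 1) ω) = fun ω => 1 + l * Z (k + 1) ω := rfl
        rw [← this, h1, Pi.add_apply, h2, condExp_const hm]
        simp
      have e3 : ℙ[(fun ω => c * (Z (k + 1) ω) ^ 2) | G (k + 1)] =ᵐ[ℙ] fun ω => c * V (k + 1) ω := by
        have hs := condExp_smul (μ := ℙ) (m := G (k + 1)) c (fun ω => (Z (k + 1) ω) ^ 2)
        filter_upwards [hs] with ω h1
        have : ((c • fun ω => (Z (k + 1) ω) ^ 2) : Ω → ℝ) = fun ω => c * (Z (k + 1) ω) ^ 2 := rfl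
        rw [← this, h1, Pi.smul_apply, hVeq (k + 1)]
        simp
      have hcondle : (ℙ[h | G (k + 1)] : Ω → ℝ) ≤ᵐ[ℙ] fun ω => 1 + c * V (k + 1) ω := by
        filter_upwards [hcond1, e1, e2, e3] with ω h1 h2 h3 h4
        rw [h2, Pi.add_apply, h3, h4] at h1
        exact h1
      -- combine
      have hprod_le : g * (ℙ[h | G (k + 1)] : Ω → ℝ) ≤ᵐ[ℙ]
          fun ω => Real.exp (l * (∑ i ∈ Icc 1 k, Z i ω) - c * ∑ i ∈ Icc 1 k, V i ω) := by
        filter_upwards [hcondle] with ω hω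
        rw [Pi.mul_apply]
        have hg0 : 0 ≤ g ω := (Real.exp_pos _).le
        calc g ω * (ℙ[h | G (k + 1)]) ω ≤ g ω * (1 + c * V (k + 1) ω) :=
            mul_le_mul_of_nonneg_left hω hg0
          _ ≤ g ω * Real.exp (c * V (k + 1) ω) := by
            refine mul_le_mul_of_nonneg_left ?_ hg0
            have := Real.add_one_le_exp (c * V (k + 1) ω)
            linarith
          _ = Real.exp (l * (∑ i ∈ Icc 1 k, Z i ω) - c * ∑ i ∈ Icc 1 k, V i ω) := by
            rw [hgdef, ← Real.exp_add]
            congr 1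
            rw [hsplitV ω]
            ring
      have hcle : (ℙ[g * h | G (k + 1)] : Ω → ℝ) ≤ᵐ[ℙ]
          fun ω => Real.exp (l * (∑ i ∈ Icc 1 k, Z i ω) - c * ∑ i ∈ Icc 1 k, V i ω) :=
        pull.le.trans hprod_le
      calc (∫ ω, Real.exp (l * (∑ i ∈ Icc 1 (k + 1), Z i ω)
              - c * ∑ i ∈ Icc 1 (k + 1), V i ω) ∂ℙ)
          = ∫ ω, (g * h) ω ∂ℙ := by rw [← hgh]
        _ = ∫ ω, (ℙ[g * h | G (k + 1)]) ω ∂ℙ := (integral_condExp hm).symm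
        _ ≤ ∫ ω, Real.exp (l * (∑ i ∈ Icc 1 k, Z i ω) - c * ∑ i ∈ Icc 1 k, V i ω) ∂ℙ :=
            integral_mono_ae integrable_condExp (hFint k hk) hcle
        _ ≤ 1 := ih hk
  -- Markov's inequality
  set r : ℝ := Real.exp (l * a - c * b) with hr
  have hr0 : 0 < r := Real.exp_pos _
  have hsub : {ω | a ≤ ∑ i ∈ Icc 1 n, Z i ω ∧ ∑ i ∈ Icc 1 n, V i ω ≤ b} ⊆
      {ω | r ≤ Real.exp (l * (∑ i ∈ Icc 1 n, Z i ω) - c * ∑ i ∈ Icc 1 n, V i ω)} := by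
    rintro ω ⟨h1, h2⟩
    show r ≤ Real.exp (l * (∑ i ∈ Icc 1 n, Z i ω) - c * ∑ i ∈ Icc 1 n, V i ω)
    rw [hr]
    apply Real.exp_le_exp.2
    have hA1 := mul_le_mul_of_nonneg_left h1 hl0.le
    have hA2 := mul_le_mul_of_nonneg_left h2 hc0.le
    linarith
  have hmarkov := mul_meas_ge_le_integral_of_nonneg (μ := ℙ)
    (f := fun ω => Real.exp (l * (∑ i ∈ Icc 1 n, Z i ω) - c * ∑ i ∈ Icc 1 n, V i ω))
    (ae_of_all _ fun ω => (Real.exp_pos _).le) (hFint n le_rfl) r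
  have hle1 := key n le_rfl
  have hmono := measure_mono (μ := (ℙ : Measure Ω)) hsub
  rw [ENNReal.le_ofReal_iff_toReal_le (measure_ne_top _ _) (Real.exp_nonneg _)]
  have hA : (ℙ {ω | a ≤ ∑ i ∈ Icc 1 n, Z i ω ∧ ∑ i ∈ Icc 1 n, V i ω ≤ b}).toReal ≤
      (ℙ {ω | r ≤ Real.exp (l * (∑ i ∈ Icc 1 n, Z i ω) - c * ∑ i ∈ Icc 1 n, V i ω)}).toReal :=
    ENNReal.toReal_mono (measure_ne_top _ _) hmono
  have hB : r * (ℙ {ω | r ≤ Real.exp (l * (∑ i ∈ Icc 1 n, Z i ω)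
      - c * ∑ i ∈ Icc 1 n, V i ω)}).toReal ≤ 1 := hmarkov.trans hle1
  have hC : (ℙ {ω | r ≤ Real.exp (l * (∑ i ∈ Icc 1 n, Z i ω)
      - c * ∑ i ∈ Icc 1 n, V i ω)}).toReal ≤ 1 / r := by
    rw [le_div_iff₀ hr0, mul_comm]
    exact hB
  have hval : 1 / r = Real.exp (-a ^ 2 / (2 * (a + b))) := by
    rw [hr, one_div, ← Real.exp_neg]
    congr 1
    rw [hc, hl]
    exact freedman_calc ha hb
  exact hA.trans (hC.trans (le_of_eq hval))

/-- Freedman's martingale inequality (special case).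
If `Z 1, …, Z n` is a martingale difference sequence with `|Z i| ≤ 1` a.s.
(`𝔼(Z i ∣ Z 1, …, Z (i-1)) = 0` a.s.), `V i` is the conditional variance of `Z i`
given `Z 1, …, Z (i-1)` and `T = ∑ i ≤ n, V i`, then for all `a b > 0`,
`ℙ(|∑ i ≤ n, Z i| ≥ a and T ≤ b) ≤ 2 exp(-a²/(2(a+b)))`. -/
theorem stmt3
    {Ω : Type*} [MeasureSpace Ω] [IsProbabilityMeasure (ℙ : Measure Ω)]
    (n : ℕ) (Z : ℕ → Ω → ℝ)
    (hmeas : ∀ i, Measurable (Z i))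
    (hbdd : ∀ i ∈ Icc 1 n, ∀ᵐ ω ∂ℙ, |Z i ω| ≤ 1)
    (G : ℕ → MeasurableSpace Ω)
    (hG : ∀ i, G i = ⨆ j ∈ Icc 1 (i - 1), MeasurableSpace.comap (Z j) inferInstance)
    (hmart : ∀ i ∈ Icc 1 n, (ℙ[Z i | G i]) =ᵐ[ℙ] 0)
    (V : ℕ → Ω → ℝ)
    (hV : ∀ i, V i = ℙ[fun ω => (Z i ω) ^ 2 | G i])
    (a b : ℝ) (ha : 0 < a) (hb : 0 < b) :
    ℙ {ω | a ≤ |∑ i ∈ Icc 1 n, Z i ω| ∧ ∑ i ∈ Icc 1 n, V i ω ≤ b} ≤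
      ENNReal.ofReal (2 * Real.exp (-a ^ 2 / (2 * (a + b)))) := by
  have hGle : ∀ i, G i ≤ (inferInstance : MeasurableSpace Ω) := by
    intro i
    rw [hG i]
    exact iSup₂_le fun j _ => measurable_iff_comap_le.mp (hmeas j)
  have hGmono : Monotone G := by
    intro i k hik
    rw [hG i, hG k]
    refine biSup_mono fun j hj => ?_
    rw [mem_Icc] at hj ⊢
    omega
  have hadapt : ∀ i k : ℕ, i ∈ Icc 1 (k - 1) → Measurable[G k] (Z i) := by
    intro i k hi
    rw [hG k]
    exact measurable_iff_comap_le.mpr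
      (le_biSup (fun j => MeasurableSpace.comap (Z j) inferInstance) hi)
  have h1 := freedman_onesided n Z G hGle hmeas hadapt hbdd hmart V hV hGmono a b ha hb
  have hmeas' : ∀ i, Measurable fun ω => -Z i ω := fun i => (hmeas i).neg
  have hadapt' : ∀ i k : ℕ, i ∈ Icc 1 (k - 1) → Measurable[G k] fun ω => -Z i ω :=
    fun i k hi => (hadapt i k hi).neg
  have hbdd' : ∀ i ∈ Icc 1 n, ∀ᵐ ω ∂ℙ, |-Z i ω| ≤ 1 := by
    intro i hi
    filter_upwards [hbdd i hi] with ω hω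
    rwa [abs_neg]
  have hmart' : ∀ i ∈ Icc 1 n, (ℙ[(fun ω => -Z i ω) | G i]) =ᵐ[ℙ] 0 := by
    intro i hi
    have hneg : (fun ω => -Z i ω) = -Z i := rfl
    rw [hneg]
    filter_upwards [condExp_neg (Z i) (μ := ℙ) (m := G i), hmart i hi] with ω hω1 hω2
    rw [hω1, Pi.neg_apply, hω2]
    simp
  have hV' : ∀ i, V i = ℙ[fun ω => (-Z i ω) ^ 2 | G i] := by
    intro i
    have hsq : (fun ω => (-Z i ω) ^ 2) = fun ω => (Z i ω) ^ 2 := by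
      funext ω; ring
    rw [hsq]
    exact hV i
  have h2 := freedman_onesided n (fun i ω => -Z i ω) G hGle hmeas' hadapt' hbdd' hmart' V hV'
    hGmono a b ha hb
  have hsub : {ω | a ≤ |∑ i ∈ Icc 1 n, Z i ω| ∧ ∑ i ∈ Icc 1 n, V i ω ≤ b} ⊆
      {ω | a ≤ ∑ i ∈ Icc 1 n, Z i ω ∧ ∑ i ∈ Icc 1 n, V i ω ≤ b} ∪
        {ω | a ≤ ∑ i ∈ Icc 1 n, -Z i ω ∧ ∑ i ∈ Icc 1 n, V i ω ≤ b} := by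
    rintro ω ⟨hω1, hω2⟩
    rcases le_abs.mp hω1 with hc | hc
    · exact Or.inl ⟨hc, hω2⟩
    · refine Or.inr ⟨?_, hω2⟩
      rw [Finset.sum_neg_distrib]
      exact hc
  calc ℙ {ω | a ≤ |∑ i ∈ Icc 1 n, Z i ω| ∧ ∑ i ∈ Icc 1 n, V i ω ≤ b}
      ≤ ℙ ({ω | a ≤ ∑ i ∈ Icc 1 n, Z i ω ∧ ∑ i ∈ Icc 1 n, V i ω ≤ b} ∪
          {ω | a ≤ ∑ i ∈ Icc 1 n, -Z i ω ∧ ∑ i ∈ Icc 1 n, V i ω ≤ b}) :=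
        measure_mono hsub
    _ ≤ ℙ {ω | a ≤ ∑ i ∈ Icc 1 n, Z i ω ∧ ∑ i ∈ Icc 1 n, V i ω ≤ b} +
          ℙ {ω | a ≤ ∑ i ∈ Icc 1 n, -Z i ω ∧ ∑ i ∈ Icc 1 n, V i ω ≤ b} :=
        measure_union_le _ _
    _ ≤ ENNReal.ofReal (Real.exp (-a ^ 2 / (2 * (a + b)))) +
          ENNReal.ofReal (Real.exp (-a ^ 2 / (2 * (a + b)))) := add_le_add h1 h2
    _ = ENNReal.ofReal (2 * Real.exp (-a ^ 2 / (2 * (a + b)))) := by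
        rw [← ENNReal.ofReal_add (Real.exp_nonneg _) (Real.exp_nonneg _)]
        congr 1
        ring
end
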